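/- arXiv:1711.03721 — 2 statements merged into one kernel-verified Lean document; each statement's English description precedes it below -/
import Mathlib

section
/- Let θ_1,...,θ_n ∈ k_∞ and H ∈ k_∞ with |H| ≥ 1. Then there exists a nonzero tuple (x_1,...,x_n) ∈ K^n such that ‖x_1θ_1 + ... + x_nθ_n‖ ≤ q^{-n}|H|^{-n} and 1 ≤ max_i |x_i| ≤ |H|. -/
set_option linter.unusedSectionVars false


open FunctionField Multiplicative WithZero

variable (Fq : Type) [Field Fq] [Fintype Fq] [DecidableEq (RatFunc Fq)]

/-- The embedding of the rational function field into its completion at infinity. -/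
noncomputable def embR : RatFunc Fq →+* RatFunc.CompletionAtInfty Fq :=
  letI := RatFunc.inftyValued Fq
  UniformSpace.Completion.coeRingHom

/-- The embedding of the polynomial ring `K = Fq[T]` into `k∞`. -/
noncomputable def embP : Polynomial Fq →+* RatFunc.CompletionAtInfty Fq :=
  (embR Fq).comp (algebraMap (Polynomial Fq) (RatFunc Fq))

/-- The absolute value `|α| = q^{-v(α)}` on `k∞`. -/
noncomputable def vabs (α : RatFunc.CompletionAtInfty Fq) : ℝ :=
  if h : Valued.v α = (0 : WithZero (Multiplicative ℤ)) then 0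
  else (Fintype.card Fq : ℝ) ^ (toAdd (unzero h))

lemma vabs_nonneg (α : RatFunc.CompletionAtInfty Fq) : 0 ≤ vabs Fq α := by
  unfold vabs; split <;> positivity

lemma v_embR (r : RatFunc Fq) : Valued.v (embR Fq r) = RatFunc.inftyValuationDef Fq r := by
  have : embR Fq r = (@UniformSpace.Completion.coe' (RatFunc Fq) (RatFunc.inftyValued Fq).toUniformSpace r) := rfl
  rw [this]
  exact (@Valued.valuedCompletion_apply (RatFunc Fq) _ _ _ (RatFunc.inftyValued Fq) r).trans (RatFunc.inftyValued.def Fq)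

lemma v_embP (p : Polynomial Fq) (hp : p ≠ 0) :
    Valued.v (embP Fq p) = ((ofAdd (p.natDegree : ℤ) : Multiplicative ℤ) : WithZero (Multiplicative ℤ)) := by
  rw [embP, RingHom.comp_apply, v_embR, RatFunc.inftyValuation.polynomial Fq hp]
  rfl

lemma one_lt_q : (1 : ℝ) < (Fintype.card Fq : ℝ) := by
  exact_mod_cast Fintype.one_lt_card

lemma vabs_of_v {α : RatFunc.CompletionAtInfty Fq} {m : ℤ} (h : Valued.v α = ((ofAdd m : Multiplicative ℤ) : WithZero (Multiplicative ℤ))) :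
    vabs Fq α = (Fintype.card Fq : ℝ) ^ m := by
  have h0 : Valued.v α ≠ 0 := by rw [h]; exact coe_ne_zero
  unfold vabs
  rw [dif_neg h0]
  have h1 : ((unzero h0 : Multiplicative ℤ) : WithZero (Multiplicative ℤ)) = ofAdd m := by
    rw [coe_unzero, h]
  rw [coe_inj] at h1
  rw [h1, toAdd_ofAdd]

lemma vabs_le_zpow {α : RatFunc.CompletionAtInfty Fq} {m : ℤ}
    (h : Valued.v α ≤ ((ofAdd m : Multiplicative ℤ) : WithZero (Multiplicative ℤ))) :
    vabs Fq α ≤ (Fintype.card Fq : ℝ) ^ m := by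
  unfold vabs; split
  · positivity
  · rename_i h0
    apply zpow_le_zpow_right₀ (one_lt_q Fq).le
    have := (coe_unzero h0).symm ▸ h
    rw [coe_le_coe] at this
    exact this

lemma exists_close (α : RatFunc.CompletionAtInfty Fq) (γ : (WithZero (Multiplicative ℤ))ˣ) :
    ∃ r : RatFunc Fq, Valued.v (α - embR Fq r) < (γ : WithZero (Multiplicative ℤ)) := by
  letI := RatFunc.inftyValued Fq
  have hd : DenseRange (embR Fq) :=
    UniformSpace.Completion.denseRange_coe
  have hS : {y : RatFunc.CompletionAtInfty Fq | Valued.v (y - α) < (γ : WithZero (Multiplicative ℤ))} ∈ nhds α := by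
    obtain ⟨m, hm⟩ : ∃ m : Multiplicative ℤ, (γ : WithZero (Multiplicative ℤ)) = (m : WithZero (Multiplicative ℤ)) :=
      (WithZero.ne_zero_iff_exists.mp γ.ne_zero).imp fun _ h => h.symm
    have hz : Valued.v (embR Fq (RatFunc.X ^ (toAdd m))) = (γ : WithZero (Multiplicative ℤ)) := by
      rw [v_embR, hm, ← RatFunc.inftyValuation_apply, RatFunc.inftyValuation.X_zpow]
      rfl
    have hz0 : (Valued.v : Valuation (RatFunc.CompletionAtInfty Fq) (WithZero (Multiplicative ℤ))).restrict
        (embR Fq (RatFunc.X ^ (toAdd m))) ≠ 0 := by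
      rw [ne_eq, Valuation.restrict_eq_zero_iff, hz]; exact γ.ne_zero
    rw [Valued.mem_nhds]
    exact ⟨Units.mk0 _ hz0, fun y hy => hz ▸ (Valuation.restrict_lt_iff (v := Valued.v)).mp hy⟩
  have := hd.mem_nhds hS
  obtain ⟨r, hr⟩ := this
  refine ⟨r, ?_⟩
  rw [show α - embR Fq r = -(embR Fq r - α) by ring, Valuation.map_neg]
  exact hr

lemma core (n h : ℕ) (hn : 0 < n) (f : Fin n → Polynomial Fq) (g : Polynomial Fq)
    (hg : g.Monic) :
    ∃ y : Fin n → Polynomial Fq, y ≠ 0 ∧ (∀ i, (y i).degree < ((h+1 : ℕ) : WithBot ℕ)) ∧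
      (((∑ i, y i * f i) %ₘ g) = 0 ∨
        ((((∑ i, y i * f i) %ₘ g).natDegree : ℤ) ≤ (g.natDegree : ℤ) - (n*(h+1) : ℕ)) ) := by
  classical
  set N := n * (h+1) with hN
  have hN1 : 1 ≤ N := Nat.mul_pos hn (Nat.succ_pos h)
  set q := Fintype.card Fq with hq
  have hq1 : 1 < q := Fintype.one_lt_card
  -- the polynomial associated to a coefficient vector
  let poly : (Fin n → (Fin (h+1) → Fq)) → Fin n → Polynomial Fq :=
    fun x i => ((Polynomial.degreeLTEquiv Fq (h+1)).symm (x i) : Polynomial Fq)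
  have hmem : ∀ x i, poly x i ∈ Polynomial.degreeLT Fq (h+1) := fun x i =>
    ((Polynomial.degreeLTEquiv Fq (h+1)).symm (x i)).2
  -- pigeonhole
  let Φ : (Fin n → (Fin (h+1) → Fq)) → (Fin (N-1) → Fq) :=
    fun x j => ((∑ i, poly x i * f i) %ₘ g).coeff (g.natDegree - 1 - j)
  have hcard : Fintype.card (Fin (N-1) → Fq) < Fintype.card (Fin n → (Fin (h+1) → Fq)) := by
    rw [Fintype.card_fun, Fintype.card_fun, Fintype.card_fun, Fintype.card_fin,
      Fintype.card_fin, Fintype.card_fin, ← pow_mul]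
    refine Nat.pow_lt_pow_right hq1 ?_
    have hmn : (h+1) * n = N := by rw [hN, Nat.mul_comm]
    omega
  obtain ⟨x, x', hxx', hΦ⟩ := Fintype.exists_ne_map_eq_of_card_lt Φ hcard
  refine ⟨fun i => poly x i - poly x' i, ?_, ?_, ?_⟩
  · intro hzero
    apply hxx'
    funext i
    have h0 : poly x i - poly x' i = 0 := congrFun hzero i
    have h1 : poly x i = poly x' i := by linear_combination (norm := ring_nf) h0
    have := sub_eq_zero.mp h0
    have h2 : (Polynomial.degreeLTEquiv Fq (h+1)).symm (x i) =
        (Polynomial.degreeLTEquiv Fq (h+1)).symm (x' i) := Subtype.ext this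
    exact (Polynomial.degreeLTEquiv Fq (h+1)).symm.injective h2
  · intro i
    have : poly x i - poly x' i ∈ Polynomial.degreeLT Fq (h+1) :=
      Submodule.sub_mem _ (hmem x i) (hmem x' i)
    exact Polynomial.mem_degreeLT.mp this
  · set P := (∑ i, (poly x i - poly x' i) * f i) %ₘ g with hP
    have hPsub : P = (∑ i, poly x i * f i) %ₘ g - (∑ i, poly x' i * f i) %ₘ g := by
      rw [hP, ← Polynomial.sub_modByMonic]
      congr 1
      rw [← Finset.sum_sub_distrib]
      congr 1; funext i; ring
    have hcoeff : ∀ j : Fin (N-1), P.coeff (g.natDegree - 1 - (j:ℕ)) = 0 := by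
      intro j
      rw [hPsub, Polynomial.coeff_sub]
      have := congrFun hΦ j
      simpa [Φ] using sub_eq_zero.mpr this
    by_cases hP0 : P = 0
    · exact Or.inl hP0
    · right
      by_contra hk
      push_neg at hk
      set k := P.natDegree with hkdef
      have hklt : k < g.natDegree := by
        by_cases hg1 : g = 1
        · exact absurd (by rw [hP, hg1, Polynomial.modByMonic_one]) hP0
        · exact Polynomial.natDegree_modByMonic_lt _ hg hg1
      have hj : g.natDegree - 1 - k < N - 1 := by omega
      have := hcoeff ⟨g.natDegree - 1 - k, hj⟩
      simp only at this
      have hkk : g.natDegree - 1 - (g.natDegree - 1 - k) = k := by omega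
      rw [hkk] at this
      exact hP0 (Polynomial.leadingCoeff_eq_zero.mp this)

lemma common_denom (n : ℕ) (r : Fin n → RatFunc Fq) :
    ∃ (f : Fin n → Polynomial Fq) (g : Polynomial Fq), g.Monic ∧
      ∀ i, (algebraMap (Polynomial Fq) (RatFunc Fq) (f i)) / (algebraMap _ _ g) = r i := by
  classical
  refine ⟨fun i => (r i).num * ∏ j ∈ Finset.univ.erase i, (r j).denom,
    ∏ j, (r j).denom, Polynomial.monic_prod_of_monic _ _ (fun j _ => RatFunc.monic_denom _), ?_⟩
  intro i
  have hc : algebraMap (Polynomial Fq) (RatFunc Fq) (∏ j ∈ Finset.univ.erase i, (r j).denom) ≠ 0 :=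
    RatFunc.algebraMap_ne_zero (Finset.prod_ne_zero_iff.mpr (fun j _ => RatFunc.denom_ne_zero _))
  rw [← Finset.mul_prod_erase Finset.univ (fun j => (r j).denom) (Finset.mem_univ i),
    map_mul, map_mul, mul_div_mul_right _ _ hc, RatFunc.num_div_denom]

lemma vabs_zero : vabs Fq (0 : RatFunc.CompletionAtInfty Fq) = 0 := by
  unfold vabs; rw [dif_pos (map_zero _)]

/-- The distance `‖α‖` from `α` to the nearest polynomial. -/
noncomputable def pnorm (α : RatFunc.CompletionAtInfty Fq) : ℝ :=
  ⨅ A : Polynomial Fq, vabs Fq (α - embP Fq A)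

lemma pnorm_le (α : RatFunc.CompletionAtInfty Fq) (A : Polynomial Fq) : pnorm Fq α ≤ vabs Fq (α - embP Fq A) :=
  ciInf_le ⟨0, by rintro _ ⟨B, rfl⟩; exact vabs_nonneg Fq _⟩ A

theorem stmt10 (n : ℕ) (hn : 0 < n) (θ : Fin n → RatFunc.CompletionAtInfty Fq) (H : RatFunc.CompletionAtInfty Fq)
    (hH : 1 ≤ vabs Fq H) :
    ∃ x : Fin n → Polynomial Fq, x ≠ 0 ∧
      pnorm Fq (∑ i, embP Fq (x i) * θ i) ≤
        (Fintype.card Fq : ℝ) ^ (-(n : ℤ)) * (vabs Fq H) ^ (-(n : ℤ)) ∧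
      (1 ≤ ⨆ i, vabs Fq (embP Fq (x i))) ∧ (⨆ i, vabs Fq (embP Fq (x i))) ≤ vabs Fq H := by
  classical
  haveI : Nonempty (Fin n) := Fin.pos_iff_nonempty.mp hn
  have hq1 : (1:ℝ) < (Fintype.card Fq : ℝ) := one_lt_q Fq
  have hq0 : (Fintype.card Fq : ℝ) ≠ 0 := by positivity
  -- extract the degree of H
  have hv0 : Valued.v H ≠ 0 := by
    intro h0
    rw [vabs, dif_pos h0] at hH
    linarith
  have hvH : Valued.v H = ((ofAdd (toAdd (unzero hv0)) : Multiplicative ℤ) :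
      WithZero (Multiplicative ℤ)) := by rw [ofAdd_toAdd, coe_unzero]
  have hvabsH : vabs Fq H = (Fintype.card Fq : ℝ) ^ (toAdd (unzero hv0)) := vabs_of_v Fq hvH
  have hmH : 0 ≤ toAdd (unzero hv0) := by
    by_contra hneg
    push_neg at hneg
    have : (Fintype.card Fq : ℝ) ^ (toAdd (unzero hv0)) < 1 := by
      apply zpow_lt_one_of_neg₀ hq1 hneg
    rw [hvabsH] at hH; linarith
  set h : ℕ := (toAdd (unzero hv0)).toNat with hh
  have hhz : (h : ℤ) = toAdd (unzero hv0) := Int.toNat_of_nonneg hmH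
  have hvabsH' : vabs Fq H = (Fintype.card Fq : ℝ) ^ (h : ℤ) := by rw [hvabsH, hhz]
  set N : ℕ := n * (h + 1) with hNdef
  -- approximate each θ i by a rational function
  have hγ : ((ofAdd (-(N + h : ℤ)) : Multiplicative ℤ) : WithZero (Multiplicative ℤ)) ≠ 0 :=
    coe_ne_zero
  choose r hr using fun i => exists_close Fq (θ i) (Units.mk0 _ hγ)
  simp only [Units.val_mk0] at hr
  -- common denominator
  obtain ⟨f, g, hg, hfg⟩ := common_denom Fq n r
  -- pigeonhole
  obtain ⟨y, hy0, hydeg, hPor⟩ := core Fq n h hn f g hg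
  set P : Polynomial Fq := (∑ i, y i * f i) %ₘ g with hPdef
  set Q : Polynomial Fq := (∑ i, y i * f i) /ₘ g with hQdef
  have hgne : algebraMap (Polynomial Fq) (RatFunc Fq) g ≠ 0 :=
    RatFunc.algebraMap_ne_zero hg.ne_zero
  -- the rational identity
  have hA : ∑ i, algebraMap (Polynomial Fq) (RatFunc Fq) (y i) * r i =
      algebraMap (Polynomial Fq) (RatFunc Fq) Q +
        algebraMap (Polynomial Fq) (RatFunc Fq) P / algebraMap (Polynomial Fq) (RatFunc Fq) g := by
    have hsum : ∑ i, algebraMap (Polynomial Fq) (RatFunc Fq) (y i) * r i =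
        algebraMap (Polynomial Fq) (RatFunc Fq) (∑ i, y i * f i) /
          algebraMap (Polynomial Fq) (RatFunc Fq) g := by
      rw [map_sum, Finset.sum_div]
      refine Finset.sum_congr rfl fun i _ => ?_
      rw [← hfg i, map_mul, mul_div_assoc]
    rw [hsum, ← Polynomial.modByMonic_add_div (∑ i, y i * f i) g, map_add, map_mul, add_div,
      mul_div_cancel_left₀ _ hgne, add_comm]
  -- push to the completion
  have hA' : ∑ i, embP Fq (y i) * embR Fq (r i) =
      embP Fq Q + embR Fq (algebraMap (Polynomial Fq) (RatFunc Fq) P /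
        algebraMap (Polynomial Fq) (RatFunc Fq) g) := by
    have := congrArg (embR Fq) hA
    rw [map_sum, map_add] at this
    simpa only [map_mul, embP, RingHom.comp_apply] using this
  have hkey : (∑ i, embP Fq (y i) * θ i) - embP Fq Q =
      (∑ i, embP Fq (y i) * (θ i - embR Fq (r i))) +
        embR Fq (algebraMap (Polynomial Fq) (RatFunc Fq) P /
          algebraMap (Polynomial Fq) (RatFunc Fq) g) := by
    have hsplit : ∑ i, embP Fq (y i) * (θ i - embR Fq (r i)) =
        ∑ i, embP Fq (y i) * θ i - ∑ i, embP Fq (y i) * embR Fq (r i) := by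
      rw [← Finset.sum_sub_distrib]
      exact Finset.sum_congr rfl fun i _ => mul_sub _ _ _
    rw [hsplit, hA']
    ring
  -- valuation bounds
  have hydegnat : ∀ i, y i ≠ 0 → (y i).natDegree ≤ h := by
    intro i hyi
    have := (Polynomial.natDegree_lt_iff_degree_lt hyi).mpr (hydeg i)
    omega
  have hterm : ∀ i ∈ Finset.univ, Valued.v (embP Fq (y i) * (θ i - embR Fq (r i))) ≤
      ((ofAdd (-(N : ℤ)) : Multiplicative ℤ) : WithZero (Multiplicative ℤ)) := by
    intro i _
    by_cases hyi : y i = 0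
    · rw [hyi, map_zero, zero_mul, map_zero]
      exact zero_le'
    · rw [Valuation.map_mul]
      calc Valued.v (embP Fq (y i)) * Valued.v (θ i - embR Fq (r i))
          ≤ ((ofAdd (h : ℤ) : Multiplicative ℤ) : WithZero (Multiplicative ℤ)) *
            ((ofAdd (-(N + h : ℤ)) : Multiplicative ℤ) : WithZero (Multiplicative ℤ)) := by
            apply mul_le_mul'
            · rw [v_embP Fq _ hyi, coe_le_coe, Multiplicative.ofAdd_le]
              exact_mod_cast hydegnat i hyi
            · exact (hr i).le
        _ = ((ofAdd (-(N : ℤ)) : Multiplicative ℤ) : WithZero (Multiplicative ℤ)) := by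
            rw [← coe_mul, ← ofAdd_add]
            congr 1
            ring_nf
  have hPg : Valued.v (embR Fq (algebraMap (Polynomial Fq) (RatFunc Fq) P /
      algebraMap (Polynomial Fq) (RatFunc Fq) g)) ≤
      ((ofAdd (-(N : ℤ)) : Multiplicative ℤ) : WithZero (Multiplicative ℤ)) := by
    by_cases hP0 : P = 0
    · rw [hP0, map_zero, zero_div, map_zero, map_zero]
      exact zero_le'
    · have hPle := hPor.resolve_left hP0
      rw [map_div₀, map_div₀,
        show (embR Fq) ((algebraMap (Polynomial Fq) (RatFunc Fq)) P) = embP Fq P from rfl,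
        show (embR Fq) ((algebraMap (Polynomial Fq) (RatFunc Fq)) g) = embP Fq g from rfl,
        v_embP Fq _ hP0, v_embP Fq _ hg.ne_zero, ← coe_div, ← ofAdd_sub,
        coe_le_coe, Multiplicative.ofAdd_le]
      omega
  have htot : Valued.v ((∑ i, embP Fq (y i) * θ i) - embP Fq Q) ≤
      ((ofAdd (-(N : ℤ)) : Multiplicative ℤ) : WithZero (Multiplicative ℤ)) := by
    rw [hkey]
    exact le_trans (Valued.v.map_add _ _) (max_le (Valuation.map_sum_le _ hterm) hPg)
  have hvabsle : vabs Fq ((∑ i, embP Fq (y i) * θ i) - embP Fq Q) ≤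
      (Fintype.card Fq : ℝ) ^ (-(N : ℤ)) := vabs_le_zpow Fq htot
  have hrhs : (Fintype.card Fq : ℝ) ^ (-(n : ℤ)) * (vabs Fq H) ^ (-(n : ℤ)) =
      (Fintype.card Fq : ℝ) ^ (-(N : ℤ)) := by
    rw [hvabsH', ← zpow_mul, ← zpow_add₀ hq0]
    congr 1
    push_cast [hNdef]
    ring
  refine ⟨y, hy0, ?_, ?_, ?_⟩
  · rw [hrhs]
    exact le_trans (pnorm_le Fq _ Q) hvabsle
  · obtain ⟨i0, hi0⟩ := Function.ne_iff.mp hy0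
    have hb : BddAbove (Set.range fun i => vabs Fq (embP Fq (y i))) :=
      Set.Finite.bddAbove (Set.finite_range _)
    refine le_trans ?_ (le_ciSup hb i0)
    rw [vabs_of_v Fq (v_embP Fq _ hi0)]
    have := zpow_le_zpow_right₀ hq1.le (show (0:ℤ) ≤ (((y i0).natDegree : ℤ)) by positivity)
    rwa [zpow_zero] at this
  · refine ciSup_le fun i => ?_
    by_cases hyi : y i = 0
    · rw [hyi, map_zero, vabs_zero]
      linarith
    · rw [vabs_of_v Fq (v_embP Fq _ hyi), hvabsH']
      exact zpow_le_zpow_right₀ hq1.le (by exact_mod_cast hydegnat i hyi)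
end

section
/- Let L_i(x) = Σ_{j=1}^m θ_{ij}x_j (1 ≤ i ≤ n) be linear forms over k_∞. For any nonnegative integers t_1,...,t_{n+m} with t_1+...+t_n = t_{n+1}+...+t_{n+m}, and any nonnegative integers δ_1,...,δ_n with δ_1+...+δ_n ≤ m-1, there exists a nonzero x ∈ K^m such that ‖L_i(x)‖ ≤ q^{-t_i - 1 - δ_i} for 1 ≤ i ≤ n and |x_j| ≤ q^{t_{n+j}} for 1 ≤ j ≤ m. -/
set_option linter.unusedSectionVars false

open FunctionField Multiplicative WithZero

variable (Fq : Type) [Field Fq] [Fintype Fq] [DecidableEq (RatFunc Fq)]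

lemma one_le_q : (1 : ℝ) ≤ (Fintype.card Fq : ℝ) := by
  exact_mod_cast Fintype.card_pos

lemma embR_v (f : RatFunc Fq) : Valued.v (embR Fq f) = RatFunc.inftyValuationDef Fq f :=
  @Valued.valuedCompletion_apply (RatFunc Fq) _ _ _ (RatFunc.inftyValued Fq) f

lemma vabs_le_pow {α : RatFunc.CompletionAtInfty Fq} {d : ℤ}
    (h : Valued.v α ≤ ((ofAdd d : Multiplicative ℤ) : ℤᵐ⁰)) :
    vabs Fq α ≤ (Fintype.card Fq : ℝ) ^ d := by
  unfold vabs
  split_ifs with h0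
  · positivity
  · rw [← WithZero.coe_unzero h0, WithZero.coe_le_coe] at h
    exact zpow_le_zpow_right₀ (one_le_q Fq) h

lemma pnorm_le_s12 {α : RatFunc.CompletionAtInfty Fq} {d : ℤ}
    (h : ∃ A : Polynomial Fq, Valued.v (α - embP Fq A) ≤ ((ofAdd d : Multiplicative ℤ) : ℤᵐ⁰)) :
    pnorm Fq α ≤ (Fintype.card Fq : ℝ) ^ d := by
  obtain ⟨A, hA⟩ := h
  refine le_trans (ciInf_le ⟨0, ?_⟩ A) (vabs_le_pow Fq hA)
  rintro _ ⟨B, rfl⟩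
  exact vabs_nonneg Fq _

lemma v_embP_le (p : Polynomial Fq) {N : ℕ} (hp : p.natDegree ≤ N) :
    Valued.v (embP Fq p) ≤ ((ofAdd (N : ℤ) : Multiplicative ℤ) : ℤᵐ⁰) := by
  rcases eq_or_ne p 0 with rfl | h0
  · simp
  · rw [embP, RingHom.comp_apply, embR_v, RatFunc.inftyValuation.polynomial Fq h0,
      WithZero.exp, WithZero.coe_le_coe, Multiplicative.ofAdd_le]
    exact_mod_cast hp


lemma valu_div_le (P Q : Polynomial Fq) (hQ : Q ≠ 0) (e : ℤ)
    (h : P = 0 ∨ (P.natDegree : ℤ) ≤ (Q.natDegree : ℤ) + e) :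
    RatFunc.inftyValuationDef Fq (algebraMap (Polynomial Fq) (RatFunc Fq) P /
      algebraMap (Polynomial Fq) (RatFunc Fq) Q) ≤ ((ofAdd e : Multiplicative ℤ) : ℤᵐ⁰) := by
  rcases h with rfl | h
  · simp [RatFunc.InftyValuation.map_zero']
  rcases eq_or_ne P 0 with rfl | h0
  · simp [RatFunc.InftyValuation.map_zero']
  have := (RatFunc.inftyValuation Fq).map_div (algebraMap (Polynomial Fq) (RatFunc Fq) P)
      (algebraMap (Polynomial Fq) (RatFunc Fq) Q)
  rw [RatFunc.inftyValuation_apply] at this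
  rw [this, RatFunc.inftyValuation_apply, RatFunc.inftyValuation_apply,
    RatFunc.inftyValuation.polynomial Fq h0, RatFunc.inftyValuation.polynomial Fq hQ]
  rw [WithZero.exp, WithZero.exp, ← WithZero.coe_div, WithZero.coe_le_coe, ← ofAdd_sub, Multiplicative.ofAdd_le]
  omega

lemma exists_poly_part (f : RatFunc Fq) :
    ∃ A : Polynomial Fq, RatFunc.inftyValuationDef Fq (f - algebraMap (Polynomial Fq) (RatFunc Fq) A)
      ≤ ((ofAdd (-1 : ℤ) : Multiplicative ℤ) : ℤᵐ⁰) := by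
  refine ⟨f.num /ₘ f.denom, ?_⟩
  have hD : f.denom ≠ 0 := f.denom_ne_zero
  have key : f - algebraMap (Polynomial Fq) (RatFunc Fq) (f.num /ₘ f.denom) =
      algebraMap (Polynomial Fq) (RatFunc Fq) (f.num %ₘ f.denom) /
        algebraMap (Polynomial Fq) (RatFunc Fq) f.denom := by
    have h1 : algebraMap (Polynomial Fq) (RatFunc Fq) f.num /
        algebraMap (Polynomial Fq) (RatFunc Fq) f.denom = f := f.num_div_denom
    have h2 : f.num %ₘ f.denom = f.num - f.denom * (f.num /ₘ f.denom) :=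
      Polynomial.modByMonic_eq_sub_mul_div _ _
    have hD' : algebraMap (Polynomial Fq) (RatFunc Fq) f.denom ≠ 0 :=
      RatFunc.algebraMap_ne_zero hD
    rw [h2, map_sub, map_mul, sub_div, mul_div_assoc, mul_comm, div_mul_eq_mul_div, h1,
      mul_div_assoc, div_self hD', mul_one]
  rw [key]
  refine valu_div_le Fq _ _ hD _ ?_
  rcases eq_or_ne (f.num %ₘ f.denom) 0 with hR | hR
  · exact Or.inl hR
  · right
    have := Polynomial.degree_modByMonic_lt f.num f.monic_denom
    have := (Polynomial.natDegree_lt_natDegree hR this)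
    omega


lemma peel (g : RatFunc Fq) (d : ℤ)
    (h : RatFunc.inftyValuationDef Fq g ≤ ((ofAdd d : Multiplicative ℤ) : ℤᵐ⁰)) :
    ∃ a : Fq, RatFunc.inftyValuationDef Fq (g - RatFunc.C a * RatFunc.X ^ d)
      ≤ ((ofAdd (d - 1) : Multiplicative ℤ) : ℤᵐ⁰) := by
  rcases eq_or_ne g 0 with rfl | hg
  · exact ⟨0, by simp [RatFunc.InftyValuation.map_zero']⟩
  by_cases hlt : RatFunc.inftyValuationDef Fq g ≤ ((ofAdd (d - 1) : Multiplicative ℤ) : ℤᵐ⁰)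
  · exact ⟨0, by simpa using hlt⟩
  -- exact case : intDegree g = d
  rw [RatFunc.inftyValuationDef, if_neg hg, WithZero.exp, WithZero.coe_le_coe, Multiplicative.ofAdd_le] at h hlt
  push_neg at hlt
  have hd : g.intDegree = d := le_antisymm h (by omega)
  set N := g.num with hN
  set D := g.denom with hD
  have hN0 : N ≠ 0 := RatFunc.num_ne_zero hg
  have hD0 : D ≠ 0 := g.denom_ne_zero
  have hdeg : d = (N.natDegree : ℤ) - D.natDegree := by
    rw [← hd]; rfl
  set a := N.leadingCoeff with ha
  have ha0 : a ≠ 0 := Polynomial.leadingCoeff_ne_zero.mpr hN0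
  refine ⟨a, ?_⟩
  set P : Polynomial Fq := N * Polynomial.X ^ D.natDegree
      - Polynomial.C a * (Polynomial.X ^ N.natDegree * D) with hP
  have key : g - RatFunc.C a * RatFunc.X ^ d =
      algebraMap (Polynomial Fq) (RatFunc Fq) P /
        algebraMap (Polynomial Fq) (RatFunc Fq) (D * Polynomial.X ^ D.natDegree) := by
    have h1 : algebraMap (Polynomial Fq) (RatFunc Fq) N /
        algebraMap (Polynomial Fq) (RatFunc Fq) D = g := g.num_div_denom
    have hX : (RatFunc.X : RatFunc Fq) ≠ 0 := RatFunc.X_ne_zero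
    have hXd : (RatFunc.X : RatFunc Fq) ^ d =
        RatFunc.X ^ N.natDegree / RatFunc.X ^ D.natDegree := by
      rw [hdeg, zpow_sub₀ hX, zpow_natCast, zpow_natCast]
    have hD' : algebraMap (Polynomial Fq) (RatFunc Fq) D ≠ 0 :=
      RatFunc.algebraMap_ne_zero hD0
    have hX' : algebraMap (Polynomial Fq) (RatFunc Fq) (Polynomial.X ^ D.natDegree) ≠ 0 :=
      RatFunc.algebraMap_ne_zero (pow_ne_zero _ Polynomial.X_ne_zero)
    rw [← h1, hXd, hP]
    push_cast [map_sub, map_mul, map_pow, RatFunc.algebraMap_C, RatFunc.algebraMap_X]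
    rw [map_pow, RatFunc.algebraMap_X] at hX'
    field_simp
  rw [key]
  refine valu_div_le Fq _ _ (mul_ne_zero hD0 (pow_ne_zero _ Polynomial.X_ne_zero)) _ ?_
  rcases eq_or_ne P 0 with hP0 | hP0
  · exact Or.inl hP0
  right
  have hdegP : P.degree < ((N.natDegree + D.natDegree : ℕ) : WithBot ℕ) := by
    have h1 : (N * Polynomial.X ^ D.natDegree).degree
        = ((N.natDegree + D.natDegree : ℕ) : WithBot ℕ) := by
      rw [Polynomial.degree_mul, Polynomial.degree_X_pow, Polynomial.degree_eq_natDegree hN0]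
      push_cast; ring
    have h2 : (Polynomial.C a * (Polynomial.X ^ N.natDegree * D)).degree
        = ((N.natDegree + D.natDegree : ℕ) : WithBot ℕ) := by
      rw [Polynomial.degree_mul, Polynomial.degree_mul, Polynomial.degree_X_pow,
        Polynomial.degree_C ha0, Polynomial.degree_eq_natDegree hD0]
      push_cast; ring
    have hlc : (N * Polynomial.X ^ D.natDegree).leadingCoeff
        = (Polynomial.C a * (Polynomial.X ^ N.natDegree * D)).leadingCoeff := by
      rw [Polynomial.leadingCoeff_mul, Polynomial.leadingCoeff_mul, Polynomial.leadingCoeff_mul,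
        Polynomial.leadingCoeff_X_pow, Polynomial.leadingCoeff_X_pow, Polynomial.leadingCoeff_C,
        (g.monic_denom).leadingCoeff]
      simp [ha]
    have := Polynomial.degree_sub_lt (h1.trans h2.symm)
      (mul_ne_zero hN0 (pow_ne_zero _ Polynomial.X_ne_zero)) hlc
    rw [hP]
    exact lt_of_lt_of_le this (le_of_eq h1)
  have hnatP : P.natDegree < N.natDegree + D.natDegree := by
    exact (Polynomial.natDegree_lt_iff_degree_lt hP0).mpr hdegP
  have hnatDX : (D * Polynomial.X ^ D.natDegree).natDegree = D.natDegree + D.natDegree := by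
    rw [Polynomial.natDegree_mul hD0 (pow_ne_zero _ Polynomial.X_ne_zero),
      Polynomial.natDegree_X_pow]
  rw [hnatDX]
  omega


/-- The correction term `Σ a_k T^{-(k+1)}`. -/
noncomputable def rfun (c : ℕ) (a : Fin c → Fq) : RatFunc Fq :=
  ∑ k : Fin c, RatFunc.C (a k) * RatFunc.X ^ (-(k.1 : ℤ) - 1)

lemma approx_rat (f : RatFunc Fq) (c : ℕ) :
    ∃ (A : Polynomial Fq) (a : Fin c → Fq),
      RatFunc.inftyValuationDef Fq (f - algebraMap (Polynomial Fq) (RatFunc Fq) A - rfun Fq c a)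
        ≤ ((ofAdd (-(c : ℤ) - 1) : Multiplicative ℤ) : ℤᵐ⁰) := by
  induction c with
  | zero =>
      obtain ⟨A, hA⟩ := exists_poly_part Fq f
      exact ⟨A, Fin.elim0, by simpa [rfun] using hA⟩
  | succ c ih =>
      obtain ⟨A, a, hA⟩ := ih
      obtain ⟨b, hb⟩ := peel Fq _ _ hA
      refine ⟨A, Fin.snoc a b, ?_⟩
      have hsum : rfun Fq (c + 1) (Fin.snoc a b) =
          rfun Fq c a + RatFunc.C b * RatFunc.X ^ (-(c : ℤ) - 1) := by
        rw [rfun, Fin.sum_univ_castSucc]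
        simp [rfun, Fin.snoc_castSucc]
      have heq : f - algebraMap (Polynomial Fq) (RatFunc Fq) A - rfun Fq (c + 1) (Fin.snoc a b)
          = (f - algebraMap (Polynomial Fq) (RatFunc Fq) A - rfun Fq c a)
            - RatFunc.C b * RatFunc.X ^ (-(c : ℤ) - 1) := by
        rw [hsum]; ring
      rw [heq]
      convert hb using 3 <;> push_cast <;> ring

lemma approx (α : RatFunc.CompletionAtInfty Fq) (c : ℕ) :
    ∃ (A : Polynomial Fq) (a : Fin c → Fq),
      Valued.v (α - embR Fq (algebraMap (Polynomial Fq) (RatFunc Fq) A) - embR Fq (rfun Fq c a))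
        ≤ ((ofAdd (-(c : ℤ) - 1) : Multiplicative ℤ) : ℤᵐ⁰) := by
  set γ : ℤᵐ⁰ˣ := Units.mk0 ((ofAdd (-(c : ℤ) - 1) : Multiplicative ℤ) : ℤᵐ⁰)
    WithZero.coe_ne_zero with hγ
  have hU : {y : RatFunc.CompletionAtInfty Fq | Valued.v (y - α) < (γ : ℤᵐ⁰)} ∈ nhds α :=
    by
      have hx0 : Valued.v (embR Fq (RatFunc.X ^ (-(c : ℤ) - 1))) = WithZero.exp (-(c : ℤ) - 1) := by
        rw [embR_v, ← RatFunc.inftyValuation_apply, RatFunc.inftyValuation.X_zpow]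
      have hne : Valuation.restrict (Valued.v : Valuation (RatFunc.CompletionAtInfty Fq) ℤᵐ⁰)
          (embR Fq (RatFunc.X ^ (-(c : ℤ) - 1))) ≠ 0 :=
        (Valuation.zero_iff _).not.mpr ((map_ne_zero _).mpr (zpow_ne_zero _ RatFunc.X_ne_zero))
      refine Valued.mem_nhds.mpr ⟨Units.mk0 _ hne, fun y hy => ?_⟩
      simp only [Set.mem_setOf_eq, Units.val_mk0, Valuation.restrict_lt_iff] at hy
      rw [hx0] at hy
      exact hy
  have hdense : DenseRange (embR Fq) := by
    exact @UniformSpace.Completion.denseRange_coe (RatFunc Fq) (RatFunc.inftyValued Fq).toUniformSpace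
  obtain ⟨-, hy, f, rfl⟩ := mem_closure_iff_nhds.mp (hdense α) _ hU
  obtain ⟨A, a, hAa⟩ := approx_rat Fq f c
  refine ⟨A, a, ?_⟩
  have h1 : Valued.v (embR Fq f - α) ≤ ((ofAdd (-(c : ℤ) - 1) : Multiplicative ℤ) : ℤᵐ⁰) :=
    le_of_lt hy
  have h2 : Valued.v (embR Fq (f - algebraMap (Polynomial Fq) (RatFunc Fq) A - rfun Fq c a))
      ≤ ((ofAdd (-(c : ℤ) - 1) : Multiplicative ℤ) : ℤᵐ⁰) := by
    rw [embR_v Fq]; exact hAa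
  have heq : α - embR Fq (algebraMap (Polynomial Fq) (RatFunc Fq) A) - embR Fq (rfun Fq c a)
      = (embR Fq (f - algebraMap (Polynomial Fq) (RatFunc Fq) A - rfun Fq c a))
        - (embR Fq f - α) := by
    rw [map_sub, map_sub]; ring
  rw [heq]
  exact le_trans (Valuation.map_sub _ _ _) (max_le h2 h1)

theorem stmt12 (n m : ℕ) (hm : 0 < m) (θ : Matrix (Fin n) (Fin m) (RatFunc.CompletionAtInfty Fq))
    (t : Fin n → ℕ) (s : Fin m → ℕ) (hts : ∑ i, t i = ∑ j, s j)
    (δ : Fin n → ℕ) (hδ : ∑ i, δ i + 1 ≤ m) :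
    ∃ x : Fin m → Polynomial Fq, x ≠ 0 ∧
      (∀ i, pnorm Fq (∑ j, θ i j * embP Fq (x j)) ≤
        (Fintype.card Fq : ℝ) ^ (-(t i : ℤ) - 1 - (δ i : ℤ))) ∧
      ∀ j, vabs Fq (embP Fq (x j)) ≤ (Fintype.card Fq : ℝ) ^ (s j : ℤ) := by
  classical
  set q := Fintype.card Fq with hq
  have hq2 : 1 < q := Fintype.one_lt_card
  -- the polynomial tuple attached to a coefficient vector
  let pol : (∀ j : Fin m, Fin (s j + 1) → Fq) → ∀ j : Fin m, Polynomial Fq :=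
    fun x j => ((Polynomial.degreeLTEquiv Fq (s j + 1)).symm (x j) : Polynomial Fq)
  have polmem : ∀ x j, (pol x j) ∈ Polynomial.degreeLT Fq (s j + 1) :=
    fun x j => ((Polynomial.degreeLTEquiv Fq (s j + 1)).symm (x j)).2
  -- the linear form values
  let L : (∀ j : Fin m, Polynomial Fq) → Fin n → RatFunc.CompletionAtInfty Fq :=
    fun y i => ∑ j, θ i j * embP Fq (y j)
  -- the pigeonhole map
  let Φ : (∀ j : Fin m, Fin (s j + 1) → Fq) → ∀ i : Fin n, Fin (t i + δ i) → Fq :=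
    fun x i => (approx Fq (L (pol x) i) (t i + δ i)).choose_spec.choose
  have hcard : Fintype.card (∀ i : Fin n, Fin (t i + δ i) → Fq) <
      Fintype.card (∀ j : Fin m, Fin (s j + 1) → Fq) := by
    rw [Fintype.card_pi, Fintype.card_pi]
    simp only [Fintype.card_fun, Fintype.card_fin]
    rw [Finset.prod_pow_eq_pow_sum, Finset.prod_pow_eq_pow_sum]
    apply Nat.pow_lt_pow_right hq2
    have h1 : ∑ i, (t i + δ i) = ∑ i, t i + ∑ i, δ i := Finset.sum_add_distrib
    have h2 : ∑ j, (s j + 1) = ∑ j, s j + m := by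
      rw [Finset.sum_add_distrib]; simp
    omega
  obtain ⟨x, y, hxy, hΦ⟩ := Fintype.exists_ne_map_eq_of_card_lt Φ hcard
  refine ⟨fun j => pol x j - pol y j, ?_, ?_, ?_⟩
  · -- nonzero
    intro h0
    apply hxy
    funext j
    have := congrFun h0 j
    simp only [Pi.zero_apply, sub_eq_zero] at this
    have : (Polynomial.degreeLTEquiv Fq (s j + 1)).symm (x j)
        = (Polynomial.degreeLTEquiv Fq (s j + 1)).symm (y j) := Subtype.ext this
    exact (Polynomial.degreeLTEquiv Fq (s j + 1)).symm.injective this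
  · -- pnorm bounds
    intro i
    set c := t i + δ i with hc
    have hx := (approx Fq (L (pol x) i) c).choose_spec.choose_spec
    have hy' := (approx Fq (L (pol y) i) c).choose_spec.choose_spec
    have hΦi : Φ x i = Φ y i := congrFun hΦ i
    set Ax := (approx Fq (L (pol x) i) c).choose with hAx
    set Ay := (approx Fq (L (pol y) i) c).choose with hAy
    have hx' : Valued.v (L (pol x) i - embP Fq Ax - embR Fq (rfun Fq c (Φ x i)))
        ≤ ((ofAdd (-(c : ℤ) - 1) : Multiplicative ℤ) : ℤᵐ⁰) := hx
    have hy'' : Valued.v (L (pol y) i - embP Fq Ay - embR Fq (rfun Fq c (Φ x i)))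
        ≤ ((ofAdd (-(c : ℤ) - 1) : Multiplicative ℤ) : ℤᵐ⁰) := by
      rw [show rfun Fq c (Φ x i) = rfun Fq c (Φ y i) from congrArg _ hΦi]
      exact hy'
    have hgoal : pnorm Fq (∑ j, θ i j * embP Fq (pol x j - pol y j))
        ≤ (q : ℝ) ^ (-(c : ℤ) - 1) := by
      apply pnorm_le_s12 Fq
      refine ⟨Ax - Ay, ?_⟩
      have heq : (∑ j, θ i j * embP Fq (pol x j - pol y j)) - embP Fq (Ax - Ay)
          = (L (pol x) i - embP Fq Ax - embR Fq (rfun Fq c (Φ x i)))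
            - (L (pol y) i - embP Fq Ay - embR Fq (rfun Fq c (Φ x i))) := by
        simp only [L, map_sub, mul_sub]
        rw [Finset.sum_sub_distrib]
        ring
      rw [heq]
      exact le_trans (Valuation.map_sub _ _ _) (max_le hx' hy'')
    refine le_trans hgoal ?_
    apply le_of_eq
    congr 1
    push_cast [hc]
    ring
  · -- degree bounds
    intro j
    refine vabs_le_pow Fq (v_embP_le Fq (N := s j) _ ?_)
    show (pol x j - pol y j).natDegree ≤ s j
    have hmem : pol x j - pol y j ∈ Polynomial.degreeLT Fq (s j + 1) :=
      Submodule.sub_mem _ (polmem x j) (polmem y j)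
    rw [Polynomial.mem_degreeLT] at hmem
    rcases eq_or_ne (pol x j - pol y j) 0 with h0 | h0
    · simp [h0]
    · have := (Polynomial.natDegree_lt_iff_degree_lt h0).mpr hmem
      omega
end
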